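/- Let G = (V,E) be an undirected graph with disjoint nonempty subsets S₁, S₂ such that the induced subgraph on S₁ ∪ S₂ is bipartite with parts S₁, S₂. Then the program ν⁽¹⁾(G) — minimizing Σ_v π(v)g(v) over f: V → ℝ, g: V → ℝ≥0 subject to Σ_v π(v)f(v)² = 1 and g(u)+g(v) ≥ (f(u)+f(v))² for all uv ∈ E — has value at most 2·π(∂(S₁∪S₂))/π(S₁∪S₂). -/

import Mathlib

open Finset

/-- Easy direction of Cheeger's inequality for bipartite vertex expansion: if `S₁, S₂`
are disjoint nonempty sets inducing a bipartite subgraph (parts `S₁`, `S₂`), then the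
program `ν⁽¹⁾(G)` has a feasible solution of value at most
`2·π(∂(S₁∪S₂))/π(S₁∪S₂)`. -/
theorem stmt_10 {V : Type*} [Fintype V] [DecidableEq V]
    (E : V → V → Prop) [DecidableRel E] (hsymm : Symmetric E)
    (π : V → ℝ) (hπ : ∀ v, 0 ≤ π v) (hπ1 : ∑ v, π v = 1)
    (S₁ S₂ : Finset V) (hS₁ : S₁.Nonempty) (hS₂ : S₂.Nonempty)
    (hdisj : Disjoint S₁ S₂)
    (hbip₁ : ∀ u ∈ S₁, ∀ v ∈ S₁, ¬ E u v)
    (hbip₂ : ∀ u ∈ S₂, ∀ v ∈ S₂, ¬ E u v)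
    (hpos : 0 < ∑ v ∈ S₁ ∪ S₂, π v) :
    ∃ (f g : V → ℝ),
      (∀ v, 0 ≤ g v) ∧
      (∑ v, π v * f v ^ 2 = 1) ∧
      (∀ u v, E u v → (f u + f v) ^ 2 ≤ g u + g v) ∧
      ∑ v, π v * g v ≤
        2 * ((∑ v ∈ (Finset.univ \ (S₁ ∪ S₂)).filter
            (fun v => ∃ u, u ∈ S₁ ∪ S₂ ∧ E u v), π v) / (∑ v ∈ S₁ ∪ S₂, π v)) := by
  classical
  set S : Finset V := S₁ ∪ S₂ with hSdef
  set s : ℝ := ∑ v ∈ S, π v with hsdef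
  have hspos : 0 < s := hpos
  have hsne : s ≠ 0 := ne_of_gt hspos
  have hsq : Real.sqrt s ^ 2 = s := Real.sq_sqrt hspos.le
  set B : Finset V := (Finset.univ \ S).filter (fun v => ∃ u, u ∈ S ∧ E u v) with hBdef
  set h : V → ℝ := fun v => if v ∈ S₁ then 1 else if v ∈ S₂ then -1 else 0 with hhdef
  have hmemB : ∀ v, v ∉ S → ∀ u, u ∈ S → E u v → v ∈ B := by
    intro v hv u hu he
    simp only [hBdef, mem_filter, mem_sdiff, mem_univ, true_and]
    exact ⟨hv, u, hu, he⟩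
  have hhsq : ∀ v, h v ^ 2 = if v ∈ S then 1 else 0 := by
    intro v
    simp only [hhdef, hSdef, mem_union]
    by_cases h1 : v ∈ S₁
    · simp [h1]
    · by_cases h2 : v ∈ S₂ <;> simp [h1, h2]
  refine ⟨fun v => h v / Real.sqrt s, fun v => if v ∈ B then 2 / s else 0, ?_, ?_, ?_, ?_⟩
  · intro v
    dsimp only
    split_ifs
    · positivity
    · exact le_refl 0
  · have key : ∀ v : V, π v * (h v / Real.sqrt s) ^ 2 = if v ∈ S then π v / s else 0 := by
      intro v
      rw [div_pow, hsq, hhsq v]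
      split_ifs <;> ring
    rw [Finset.sum_congr rfl (fun v _ => key v), Finset.sum_ite_mem, Finset.univ_inter,
      ← Finset.sum_div]
    exact div_self hsne
  · intro u v huv
    dsimp only
    rw [← add_div, div_pow, hsq]
    have gnnu : (0:ℝ) ≤ if u ∈ B then 2 / s else 0 := by split_ifs; · positivity
                                                         · exact le_refl 0
    have gnnv : (0:ℝ) ≤ if v ∈ B then 2 / s else 0 := by split_ifs; · positivity
                                                         · exact le_refl 0
    have honepos : (0:ℝ) < 1 / s := by positivity
    by_cases hu1 : u ∈ S₁
    · by_cases hv1 : v ∈ S₁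
      · exact absurd huv (hbip₁ u hu1 v hv1)
      by_cases hv2 : v ∈ S₂
      · have h0 : h u + h v = 0 := by
          simp [hhdef, hu1, hv1, hv2]
        rw [h0]
        simpa using add_nonneg gnnu gnnv
      · have hvS : v ∉ S := by simp [hSdef, hv1, hv2]
        have hvB : v ∈ B := hmemB v hvS u (mem_union_left S₂ hu1) huv
        have h0 : h u + h v = 1 := by simp [hhdef, hu1, hv1, hv2]
        rw [h0, if_pos hvB, one_pow]
        have h2s : (2:ℝ) / s = 1 / s + 1 / s := by ring
        linarith
    · by_cases hu2 : u ∈ S₂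
      · by_cases hv2 : v ∈ S₂
        · exact absurd huv (hbip₂ u hu2 v hv2)
        by_cases hv1 : v ∈ S₁
        · have h0 : h u + h v = 0 := by simp [hhdef, hu1, hu2, hv1]
          rw [h0]
          simpa using add_nonneg gnnu gnnv
        · have hvS : v ∉ S := by simp [hSdef, hv1, hv2]
          have hvB : v ∈ B := hmemB v hvS u (mem_union_right S₁ hu2) huv
          have h0 : h u + h v = -1 := by simp [hhdef, hu1, hu2, hv1, hv2]
          rw [h0, if_pos hvB, neg_one_sq]
          have h2s : (2:ℝ) / s = 1 / s + 1 / s := by ring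
          linarith
      · have huS : u ∉ S := by simp [hSdef, hu1, hu2]
        have hhu : h u = 0 := by simp [hhdef, hu1, hu2]
        by_cases hvS : v ∈ S
        · have huB : u ∈ B := hmemB u huS v hvS (hsymm huv)
          rw [hhu, zero_add, if_pos huB]
          have hv2 : h v ^ 2 = 1 := by rw [hhsq v, if_pos hvS]
          rw [hv2]
          have h2s : (2:ℝ) / s = 1 / s + 1 / s := by ring
          linarith
        · have hhv : h v = 0 := by
            have h1 : v ∉ S₁ := fun hc => hvS (mem_union_left _ hc)
            have h2 : v ∉ S₂ := fun hc => hvS (mem_union_right _ hc)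
            simp [hhdef, h1, h2]
          rw [hhu, hhv]
          simpa using add_nonneg gnnu gnnv
  · have key : ∀ v : V, π v * (if v ∈ B then 2 / s else 0) =
        if v ∈ B then π v * (2 / s) else 0 := by
      intro v; split_ifs <;> ring
    rw [Finset.sum_congr rfl (fun v _ => key v), Finset.sum_ite_mem, Finset.univ_inter,
      ← Finset.sum_mul]
    have heq : (∑ v ∈ B, π v) * (2 / s) = 2 * ((∑ v ∈ B, π v) / s) := by ring
    rw [heq]
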